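/- (Total curvature greedy performance bound.) Let f be a monotone submodular set function on a finite ground set E with f(∅) = 0 and f({e}) > 0 for every e ∈ E, let N ≥ 1, let s_1,…,s_N be a greedy sequence with S^G = {s_1,…,s_N}, and let S* be any subset of E with |S*| ≤ N. Let α_T = max_{e∈E} (1 − Δf(e | E∖{e}) / Δf(e|∅)) be the total curvature of f, and suppose α_T > 0. Then f(S^G) ≥ (1/α_T) · (1 − ((N − α_T)/N)^N) · f(S*). -/

import Mathlib

open scoped Classical


private lemma tangent_aux (m : ℕ) {x y : ℝ} (hy : 0 ≤ y) (hxy : y ≤ x) :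
    x^(m+1) - y^(m+1) ≤ (m+1) * x^m * (x - y) := by
  induction m with
  | zero => simp
  | succ m ih =>
    have hx : 0 ≤ x := hy.trans hxy
    have hyx : y^(m+1) ≤ x^(m+1) := pow_le_pow_left₀ hy hxy _
    have h1 : x^(m+1+1) - y^(m+1+1)
        = x*(x^(m+1) - y^(m+1)) + y^(m+1)*(x-y) := by ring
    have h2 : x*(x^(m+1) - y^(m+1)) ≤ x*((m+1) * x^m * (x - y)) :=
      mul_le_mul_of_nonneg_left ih hx
    have h3 : x*((m+1) * x^m * (x - y)) = (m+1) * x^(m+1) * (x-y) := by ring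
    have h4 : y^(m+1)*(x-y) ≤ x^(m+1)*(x-y) :=
      mul_le_mul_of_nonneg_right hyx (sub_nonneg.2 hxy)
    have h5 : ((m+1:ℕ)+1 : ℝ) * x^(m+1) * (x-y) = (m+1) * x^(m+1) * (x-y) + x^(m+1)*(x-y) := by
      push_cast; ring
    linarith

private lemma G_aux {a : ℝ} (ha0 : 0 ≤ a) (ha1 : a ≤ 1) {n : ℕ} (hn : 1 ≤ n)
    {p : ℝ} (hp : (n:ℝ) + 1 ≤ p) :
    (1 - a/p)^n ≤ (1 - a/(p-1))^(n-1) := by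
  have hn1 : (1:ℝ) ≤ (n:ℝ) := by exact_mod_cast hn
  have hp2 : (2:ℝ) ≤ p := by linarith
  have hp0 : (0:ℝ) < p := by linarith
  have hp10 : (0:ℝ) < p - 1 := by linarith
  have hx0 : (0:ℝ) ≤ 1 - a/p := by
    have : a/p ≤ 1 := by rw [div_le_one hp0]; linarith
    linarith
  have hy0 : (0:ℝ) ≤ 1 - a/(p-1) := by
    have : a/(p-1) ≤ 1 := by rw [div_le_one hp10]; linarith
    linarith
  have hyx : 1 - a/(p-1) ≤ 1 - a/p := by
    have : a/p ≤ a/(p-1) := by gcongr <;> linarith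
    linarith
  rcases eq_or_lt_of_le hn with h1 | h2
  · obtain rfl : n = 1 := h1.symm
    have : a/p ≥ 0 := by positivity
    simpa using by linarith
  · obtain ⟨m, rfl⟩ : ∃ m, n = m + 2 := ⟨n - 2, by omega⟩
    have hineq : ((m:ℝ)+1) * p ≤ (p-1)^2 := by
      have hnp : (m:ℝ) + 2 + 1 ≤ p := by push_cast at hp ⊢; linarith
      nlinarith
    have hdiff : a/(p-1) - a/p = a/((p-1)*p) := by field_simp; ring
    have hkey : ((m:ℝ)+1) * ((1 - a/p) - (1 - a/(p-1))) ≤ (1 - a/p) * (a/p) := by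
      have e1 : (1 - a/p) - (1 - a/(p-1)) = a/((p-1)*p) := by rw [← hdiff]; ring
      rw [e1]
      have h2' : ((m:ℝ)+1)*(a/((p-1)*p)) ≤ ((p-1)^2/p)*(a/((p-1)*p)) := by
        apply mul_le_mul_of_nonneg_right _ (by positivity)
        rw [le_div_iff₀ hp0]; exact hineq
      have h3' : ((p-1)^2/p)*(a/((p-1)*p)) = ((p-1)/p)*(a/p) := by field_simp
      have h4' : ((p-1)/p)*(a/p) ≤ (1 - a/p)*(a/p) := by
        apply mul_le_mul_of_nonneg_right _ (by positivity)
        have : a/p ≤ 1/p := by gcongr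
        have e2 : (p-1)/p = 1 - 1/p := by field_simp
        linarith
      linarith
    -- now conclude : x^(m+2) ≤ y^(m+1)
    set x : ℝ := 1 - a/p with hxdef
    set y : ℝ := 1 - a/(p-1) with hydef
    have hxa : a/p = 1 - x := by rw [hxdef]; ring
    clear_value x y
    have htan := tangent_aux m hy0 hyx
    have hxm : (0:ℝ) ≤ x^m := pow_nonneg hx0 m
    have hstep : ((m:ℝ)+1) * x^m * (x - y) ≤ x^m * (x * (a/p)) := by
      have := mul_le_mul_of_nonneg_left hkey hxm
      calc ((m:ℝ)+1) * x^m * (x-y) = x^m * (((m:ℝ)+1) * (x - y)) := by push_cast; ring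
        _ ≤ x^m * (x * (a/p)) := by
            apply mul_le_mul_of_nonneg_left _ hxm
            rw [hxa] at hkey ⊢
            push_cast at hkey ⊢; linarith
    have hfin : x^(m+2) ≤ y^(m+1) := by
      have e4 : x^(m+2) = x^(m+1) - x^m * (x * (a/p)) := by
        rw [hxa]; ring
      push_cast at htan
      nlinarith [htan, hstep, e4]
    simpa using hfin


private lemma star_aux {a : ℝ} (ha0 : 0 ≤ a) (ha1 : a ≤ 1) {n P : ℕ} (hn : 1 ≤ n)
    (hnP : n ≤ P) :
    (1-a)/(P:ℝ) + (1 - 1/(P:ℝ))*(1 - a/((P:ℝ)-1))^(n-1) ≤ (1 - a/(P:ℝ))^n := by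
  induction n, hn using Nat.le_induction with
  | base =>
    have hP1 : (1:ℝ) ≤ (P:ℝ) := by exact_mod_cast hnP
    have hP0 : (P:ℝ) ≠ 0 := by positivity
    have : (1-a)/(P:ℝ) + (1 - 1/(P:ℝ)) = 1 - a/(P:ℝ) := by field_simp; ring
    simpa using le_of_eq this
  | succ n hn ih =>
    have hP : (n:ℝ) + 1 ≤ (P:ℝ) := by exact_mod_cast hnP
    have hn1 : (1:ℝ) ≤ (n:ℝ) := by exact_mod_cast hn
    have hP2 : (2:ℝ) ≤ (P:ℝ) := by linarith
    have hP0 : (P:ℝ) ≠ 0 := by positivity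
    have hP10 : ((P:ℝ)-1) ≠ 0 := by intro h; nlinarith
    have ihh := ih (by omega)
    have hG := G_aux ha0 ha1 hn hP
    obtain ⟨k, rfl⟩ : ∃ k, n = k + 1 := ⟨n - 1, by omega⟩
    -- exponents : (k+1+1)-1 = k+1 , (k+1)-1 = k
    have e0 : (k+1+1)-1 = k+1 := rfl
    have e1 : (k+1)-1 = k := rfl
    rw [e0]
    rw [e1] at ihh hG
    set y : ℝ := 1 - a/((P:ℝ)-1) with hy
    have hmul : (1 - 1/(P:ℝ)) * y = (1 - 1/(P:ℝ)) - a/(P:ℝ) := by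
      rw [hy]; field_simp
    have e2 : (1 - 1/(P:ℝ))*y^(k+1) = (1 - 1/(P:ℝ))*y^k - (a/(P:ℝ))*y^k := by
      calc (1 - 1/(P:ℝ))*y^(k+1) = ((1 - 1/(P:ℝ))*y)*y^k := by ring
        _ = ((1 - 1/(P:ℝ)) - a/(P:ℝ))*y^k := by rw [hmul]
        _ = (1 - 1/(P:ℝ))*y^k - (a/(P:ℝ))*y^k := by ring
    have hap : 0 ≤ a/(P:ℝ) := by positivity
    have h3 : (a/(P:ℝ))*(1 - a/(P:ℝ))^(k+1) ≤ (a/(P:ℝ))*y^k :=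
      mul_le_mul_of_nonneg_left hG hap
    have e5 : (1 - a/(P:ℝ))^(k+1) - (a/(P:ℝ))*(1 - a/(P:ℝ))^(k+1) = (1-a/(P:ℝ))^(k+1+1) := by
      ring
    linarith [ihh]


private lemma sub_remove {E : Type*} [Fintype E] [DecidableEq E] (f : Finset E → ℝ)
    (hsub : ∀ A B : Finset E, A ⊆ B → ∀ e ∉ B,
      f (insert e B) - f B ≤ f (insert e A) - f A)
    (D A : Finset E) (hDA : D ⊆ A) :
    ∑ e ∈ D, (f (insert e (Finset.univ.erase e)) - f (Finset.univ.erase e))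
      ≤ f A - f (A \ D) := by
  classical
  revert hDA
  induction D using Finset.induction_on with
  | empty => intro _; simp
  | @insert d D' hd ih =>
    intro hDA
    have hdA : d ∈ A := hDA (Finset.mem_insert_self d D')
    have hD'A : D' ⊆ A := fun x hx => hDA (Finset.mem_insert_of_mem hx)
    rw [Finset.sum_insert hd]
    have hset : A \ insert d D' = (A \ D').erase d := by
      ext x; simp [Finset.mem_erase, Finset.mem_sdiff, Finset.mem_insert]; tauto
    have hdAD : d ∈ A \ D' := Finset.mem_sdiff.2 ⟨hdA, hd⟩
    have hins : insert d ((A \ D').erase d) = A \ D' := Finset.insert_erase hdAD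
    have hsubset : (A \ D').erase d ⊆ Finset.univ.erase d :=
      Finset.erase_subset_erase d (Finset.subset_univ _)
    have hkey := hsub ((A \ D').erase d) (Finset.univ.erase d) hsubset d
      (Finset.notMem_erase d _)
    rw [hins] at hkey
    have := ih hD'A
    rw [hset]
    linarith


private lemma add_bound {E : Type*} [Fintype E] [DecidableEq E] (f : Finset E → ℝ)
    (hmono : ∀ A B : Finset E, A ⊆ B → f A ≤ f B)
    (hsub : ∀ A B : Finset E, A ⊆ B → ∀ e ∉ B,
      f (insert e B) - f B ≤ f (insert e A) - f A)
    (A D : Finset E) :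
    f (A ∪ D) ≤ f A + ∑ e ∈ D, (f (insert e A) - f A) := by
  classical
  induction D using Finset.induction_on with
  | empty => simp
  | @insert d D' hd ih =>
    rw [Finset.sum_insert hd, Finset.union_insert]
    by_cases hdAD : d ∈ A ∪ D'
    · rw [Finset.insert_eq_self.2 hdAD]
      have hterm : 0 ≤ f (insert d A) - f A :=
        sub_nonneg.2 (hmono A (insert d A) (Finset.subset_insert d A))
      linarith
    · have := hsub A (A ∪ D') Finset.subset_union_left d hdAD
      linarith


private lemma core (N : ℕ) (hN : 1 ≤ N) (α : ℝ) (hα0 : 0 < α) (hα1 : α ≤ 1)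
    (ρ : ℕ → ℝ) (hρ : ∀ k, 0 ≤ ρ k) (g : ℕ → Prop) [DecidablePred g]
    (fstar : ℝ) (hfstar : 0 ≤ fstar)
    (hstep : ∀ t, t < N → fstar ≤ α * (∑ k ∈ Finset.range t, ρ k)
        + (1-α) * (∑ k ∈ (Finset.range t).filter g, ρ k)
        + ((N:ℝ) - ((Finset.range t).filter g).card) * ρ t) :
    (1/α) * (1 - (1 - α/(N:ℝ))^N) * fstar ≤ ∑ k ∈ Finset.range N, ρ k := by
  classical
  set F : ℕ → ℝ := fun t => ∑ k ∈ Finset.range t, ρ k with hF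
  set R : ℕ → ℝ := fun t => ∑ k ∈ (Finset.range t).filter g, ρ k with hR
  set m : ℕ → ℕ := fun t => ((Finset.range t).filter g).card with hm
  set u : ℕ → ℝ := fun t => fstar - α * F t - (1-α) * R t with hu
  have hN0 : ((N:ℝ)) ≠ 0 := by positivity
  have hαN : α/(N:ℝ) ≤ 1 := by
    rw [div_le_one (by positivity)]
    have : (1:ℝ) ≤ (N:ℝ) := by exact_mod_cast hN
    linarith
  have hq : (1:ℝ) - α ≤ (1 - α/(N:ℝ))^N := by
    have h1 : (-2:ℝ) ≤ -(α/(N:ℝ)) := by linarith [div_nonneg hα0.le (by positivity : (0:ℝ) ≤ (N:ℝ))]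
    have := one_add_mul_le_pow h1 N
    have e1 : (1:ℝ) + (N:ℝ) * -(α/(N:ℝ)) = 1 - α := by field_simp; ring
    rw [e1] at this
    simpa [sub_eq_add_neg] using this
  have hcoef : (1/α) * (1 - (1 - α/(N:ℝ))^N) ≤ 1 := by
    rw [div_mul_eq_mul_div, div_le_one hα0]
    linarith
  have hRF : ∀ t, R t ≤ F t := by
    intro t
    apply Finset.sum_le_sum_of_subset_of_nonneg (Finset.filter_subset _ _)
    intro i _ _; exact hρ i
  have hFmono : ∀ t₁ t₂, t₁ ≤ t₂ → F t₁ ≤ F t₂ := by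
    intro t₁ t₂ h
    apply Finset.sum_le_sum_of_subset_of_nonneg (by simpa using Finset.range_subset_range.2 h)
    intro i _ _; exact hρ i
  by_cases hpos : ∀ t, t < N → 0 ≤ u t
  · -- main case : backward induction
    have key : ∀ d, d ≤ N →
        u N + (1-α) * (∑ k ∈ (Finset.Ico (N-d) N).filter g, ρ k)
          ≤ (1 - α/((N:ℝ) - (m (N-d))))^d * u (N-d) := by
      intro d
      induction d with
      | zero => intro _; simp
      | succ d ih =>
        intro hd1
        have ht : N - (d+1) < N := by omega
        set t := N - (d+1) with htdef
        have ht1 : N - d = t + 1 := by omega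
        have hmt_le : m t ≤ t := by
          simpa using (Finset.card_filter_le (Finset.range t) g)
        have hmtN : m t < N := lt_of_le_of_lt hmt_le ht
        have hPpos : (0:ℝ) < (N:ℝ) - m t := by
          have : (m t : ℝ) < (N:ℝ) := by exact_mod_cast hmtN
          linarith
        have hPd : (d:ℝ) + 1 ≤ (N:ℝ) - m t := by
          have h' : m t + (d+1) ≤ N := by omega
          have : ((m t : ℝ)) + (d+1) ≤ (N:ℝ) := by exact_mod_cast h'
          linarith
        have hstept := hstep t ht
        have huP : u t ≤ ((N:ℝ) - m t) * ρ t := by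
          simp only [hu, hF, hR, hm]
          linarith [hstept]
        have hρt := hρ t
        have hρP : u t / ((N:ℝ) - m t) ≤ ρ t :=
          (div_le_iff₀ hPpos).2 (by linarith)
        have hIco : Finset.Ico t N = insert t (Finset.Ico (t+1) N) := by
          ext x; simp [Finset.mem_Ico, Finset.mem_insert]; omega
        have hFstep : F (t+1) = F t + ρ t := Finset.sum_range_succ ρ t
        have ihh := ih (by omega)
        rw [ht1] at ihh
        by_cases hgt : g t
        · -- J-step
          have hnotmem : t ∉ (Finset.range t).filter g := by simp
          have hmstep : m (t+1) = m t + 1 := by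
            simp only [hm, Finset.range_add_one, Finset.filter_insert, if_pos hgt]
            rw [Finset.card_insert_of_notMem hnotmem]
          have hRstep : R (t+1) = R t + ρ t := by
            simp only [hR, Finset.range_add_one, Finset.filter_insert, if_pos hgt]
            rw [Finset.sum_insert hnotmem]
            ring
          have hBstep : ∑ k ∈ (Finset.Ico t N).filter g, ρ k
              = ρ t + ∑ k ∈ (Finset.Ico (t+1) N).filter g, ρ k := by
            rw [hIco, Finset.filter_insert, if_pos hgt,
              Finset.sum_insert (by simp [Finset.mem_filter])]
          have hu1 : u (t+1) = u t - ρ t := by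
            simp only [hu, hFstep, hRstep]; ring
          have hPm1 : ((N:ℝ) - m (t+1)) = ((N:ℝ) - m t) - 1 := by
            rw [hmstep]; push_cast; ring
          rw [hPm1, hu1] at ihh
          set P : ℝ := (N:ℝ) - m t with hPdef
          set C : ℝ := 1 - α/(P - 1) with hCdef
          have hCd_ge : 1 - α ≤ C^d := by
            rcases Nat.eq_zero_or_pos d with hd0 | hd0
            · subst hd0; simpa using hα0.le
            · have hd1' : (1:ℝ) ≤ (d:ℝ) := by exact_mod_cast hd0
              have hPd1 : (d:ℝ) ≤ P - 1 := by rw [hPdef]; linarith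
              have hP10 : (0:ℝ) < P - 1 := by linarith
              have hb : (-2:ℝ) ≤ -(α/(P-1)) := by
                have : α/(P-1) ≤ 1 := by rw [div_le_one hP10]; linarith
                linarith
              have := one_add_mul_le_pow hb d
              have e2 : (1:ℝ) + (d:ℝ) * -(α/(P-1)) = 1 - (d:ℝ)*(α/(P-1)) := by ring
              have e3 : (d:ℝ)*(α/(P-1)) ≤ α := by
                have h4 : (d:ℝ)*(α/(P-1)) ≤ (P-1)*(α/(P-1)) :=
                  mul_le_mul_of_nonneg_right hPd1 (by positivity)
                have h5 : (P-1)*(α/(P-1)) = α := by field_simp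
                linarith
              have e6 : (1:ℝ) + -(α / (P - 1)) = C := by rw [hCdef]; ring
              rw [e2, e6] at this
              linarith
          have hupos := hpos t ht
          have hstar := star_aux hα0.le hα1 (n := d+1) (P := N - m t)
            (by omega) (by omega)
          have hcast : ((N - m t : ℕ):ℝ) = P := by
            rw [hPdef, Nat.cast_sub hmtN.le]
          rw [hcast] at hstar
          have e7 : (d+1)-1 = d := rfl
          rw [e7] at hstar
          -- hstar : (1-α)/P + (1-1/P)*C^d ≤ (1-α/P)^(d+1)
          have hcoefneg : (1-α) - C^d ≤ 0 := by linarith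
          calc u N + (1-α) * ∑ k ∈ (Finset.Ico t N).filter g, ρ k
              = (u N + (1-α) * ∑ k ∈ (Finset.Ico (t+1) N).filter g, ρ k) + (1-α)*ρ t := by
                rw [hBstep]; ring
            _ ≤ C^d * (u t - ρ t) + (1-α)*ρ t := by linarith [ihh]
            _ = C^d * u t + ((1-α) - C^d) * ρ t := by ring
            _ ≤ C^d * u t + ((1-α) - C^d) * (u t / P) := by
                have := mul_le_mul_of_nonpos_left hρP hcoefneg
                linarith
            _ = u t * ((1-α)/P + (1 - 1/P)*C^d) := by
                have hP0' : P ≠ 0 := ne_of_gt hPpos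
                field_simp
                ring
            _ ≤ u t * (1 - α/P)^(d+1) := mul_le_mul_of_nonneg_left hstar hupos
            _ = (1 - α/((N:ℝ) - m t))^(d+1) * u t := by rw [← hPdef]; ring
        · -- non-J step
          have hmstep : m (t+1) = m t := by
            simp [hm, Finset.range_add_one, Finset.filter_insert, hgt]
          have hRstep : R (t+1) = R t := by
            simp [hR, Finset.range_add_one, Finset.filter_insert, hgt]
          have hBstep : ∑ k ∈ (Finset.Ico t N).filter g, ρ k
              = ∑ k ∈ (Finset.Ico (t+1) N).filter g, ρ k := by
            rw [hIco, Finset.filter_insert, if_neg hgt]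
          have hu1 : u (t+1) = u t - α * ρ t := by
            simp only [hu, hFstep, hRstep]; ring
          rw [hmstep, hu1] at ihh
          set P : ℝ := (N:ℝ) - m t with hPdef
          have hA0 : (0:ℝ) ≤ 1 - α/P := by
            have : α/P ≤ 1 := by rw [div_le_one hPpos]; linarith
            linarith
          have hinner : u t - α * ρ t ≤ (1 - α/P) * u t := by
            have h8 : α*(u t/P) ≤ α*ρ t := mul_le_mul_of_nonneg_left hρP hα0.le
            have h9 : (1 - α/P)*u t = u t - α*(u t/P) := by
              have hP0' : P ≠ 0 := ne_of_gt hPpos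
              field_simp
            linarith
          calc u N + (1-α) * ∑ k ∈ (Finset.Ico t N).filter g, ρ k
              = u N + (1-α) * ∑ k ∈ (Finset.Ico (t+1) N).filter g, ρ k := by rw [hBstep]
            _ ≤ (1 - α/P)^d * (u t - α * ρ t) := ihh
            _ ≤ (1 - α/P)^d * ((1 - α/P) * u t) :=
                mul_le_mul_of_nonneg_left hinner (pow_nonneg hA0 d)
            _ = (1 - α/((N:ℝ) - m t))^(d+1) * u t := by rw [← hPdef]; ring
    have hkey := key N le_rfl
    rw [Nat.sub_self] at hkey
    have hm0 : m 0 = 0 := by simp [hm]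
    have hu0 : u 0 = fstar := by simp [hu, hF, hR]
    have hB0 : ∑ k ∈ (Finset.Ico 0 N).filter g, ρ k = R N := by
      rw [hR]; congr 1; rw [Finset.range_eq_Ico]
    have huN : u N = fstar - α * F N - (1-α) * R N := rfl
    rw [hm0, hu0, hB0, huN] at hkey
    -- hkey : fstar - α F N - (1-α) R N + (1-α) R N ≤ (1-α/N)^N * fstar
    have hmain : (1 - (1 - α/(N:ℝ))^N) * fstar ≤ α * F N := by
      simp only [Nat.cast_zero, sub_zero] at hkey
      linarith [hkey]
    have := mul_le_mul_of_nonneg_left hmain (by positivity : (0:ℝ) ≤ 1/α)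
    calc (1/α) * (1 - (1 - α/(N:ℝ))^N) * fstar
        = (1/α) * ((1 - (1 - α/(N:ℝ))^N) * fstar) := by ring
      _ ≤ (1/α) * (α * F N) := this
      _ = F N := by field_simp
  · -- degenerate case : some u t < 0
    push_neg at hpos
    obtain ⟨t, ht, hut⟩ := hpos
    have h1 : fstar < F t := by
      have h2 : α * F t + (1-α) * R t ≤ F t := by
        have := hRF t
        nlinarith [hRF t]
      simp only [hu] at hut
      linarith
    have h3 : F t ≤ F N := hFmono t N ht.le
    calc (1/α) * (1 - (1 - α/(N:ℝ))^N) * fstar ≤ 1 * fstar := by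
          apply mul_le_mul_of_nonneg_right hcoef hfstar
      _ = fstar := one_mul _
      _ ≤ ∑ k ∈ Finset.range N, ρ k := by simp only [hF] at h1 h3; linarith


/-- Total-curvature greedy performance bound:
`f(S^G) ≥ (1/α_T)(1 − ((N − α_T)/N)^N) · f(S*)`. -/
theorem greedy_total_curvature_bound
    {E : Type*} [Fintype E] [DecidableEq E]
    (N : ℕ) (hN : 1 ≤ N) (hcard : N ≤ Fintype.card E)
    (f : Finset E → ℝ)
    (hf0 : f ∅ = 0)
    (hfpos : ∀ e : E, 0 < f {e})
    (hmono : ∀ A B : Finset E, A ⊆ B → f A ≤ f B)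
    (hsub : ∀ A B : Finset E, A ⊆ B → ∀ e ∉ B,
      f (insert e B) - f B ≤ f (insert e A) - f A)
    (s : Fin N → E) (hs : Function.Injective s)
    (S : ℕ → Finset E)
    (hS : ∀ k : ℕ, S k = (Finset.univ.filter (fun j : Fin N => (j : ℕ) < k)).image s)
    (hgreedy : ∀ k : Fin N, ∀ e : E, e ∉ S k →
      f (insert e (S k)) - f (S k) ≤ f (insert (s k) (S k)) - f (S k))
    (Sstar : Finset E) (hstar : Sstar.card ≤ N)
    (αT : ℝ)
    (hαT : IsGreatest (Set.range fun e : E =>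
      1 - (f (insert e ((Finset.univ : Finset E).erase e))
            - f ((Finset.univ : Finset E).erase e)) / f {e}) αT)
    (hαTpos : 0 < αT) :
    (1 / αT) * (1 - ((N - αT) / N) ^ N) * f Sstar ≤ f (S N) := by
  classical
  have hN0 : ((N:ℝ)) ≠ 0 := by positivity
  -- αT ≤ 1
  have hα1 : αT ≤ 1 := by
    obtain ⟨e₀, he₀⟩ := hαT.1
    have hnum : 0 ≤ f (insert e₀ (Finset.univ.erase e₀)) - f (Finset.univ.erase e₀) :=
      sub_nonneg.2 (hmono _ _ (Finset.subset_insert _ _))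
    have : 0 ≤ (f (insert e₀ (Finset.univ.erase e₀)) - f (Finset.univ.erase e₀)) / f {e₀} :=
      div_nonneg hnum (hfpos e₀).le
    rw [← he₀]
    linarith
  -- curvature bound for each element
  have hcurv : ∀ e : E, (1 - αT) * f {e}
      ≤ f (insert e (Finset.univ.erase e)) - f (Finset.univ.erase e) := by
    intro e
    have hub := hαT.2 (Set.mem_range_self e)
    have := (hfpos e)
    have h2 : (1 - αT) ≤ (f (insert e (Finset.univ.erase e)) - f (Finset.univ.erase e)) / f {e} := by
      linarith
    calc (1 - αT) * f {e}
        ≤ ((f (insert e (Finset.univ.erase e)) - f (Finset.univ.erase e)) / f {e}) * f {e} :=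
          mul_le_mul_of_nonneg_right h2 (hfpos e).le
      _ = f (insert e (Finset.univ.erase e)) - f (Finset.univ.erase e) := by
          field_simp
  set ρ : ℕ → ℝ := fun k => f (S (k+1)) - f (S k) with hρdef
  have hS0 : S 0 = ∅ := by rw [hS]; simp
  have hSsub : ∀ k, S k ⊆ S (k+1) := by
    intro k
    rw [hS, hS]
    apply Finset.image_subset_image
    intro j hj
    simp only [Finset.mem_filter, Finset.mem_univ, true_and] at hj ⊢
    omega
  have hρ0 : ∀ k, 0 ≤ ρ k := fun k => sub_nonneg.2 (hmono _ _ (hSsub k))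
  have hFt : ∀ t, ∑ k ∈ Finset.range t, ρ k = f (S t) := by
    intro t
    have := Finset.sum_range_sub (fun k => f (S k)) t
    rw [hρdef]
    rw [this, hS0, hf0, sub_zero]
  have hnotmem : ∀ j : Fin N, s j ∉ S (j:ℕ) := by
    intro j hmem
    rw [hS] at hmem
    simp only [Finset.mem_image, Finset.mem_filter, Finset.mem_univ, true_and] at hmem
    obtain ⟨i, hit, hie⟩ := hmem
    have := hs hie
    subst this
    omega
  have hSsucc : ∀ j : Fin N, S ((j:ℕ)+1) = insert (s j) (S (j:ℕ)) := by
    intro j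
    rw [hS, hS]
    have hfil : (Finset.univ.filter (fun i : Fin N => (i:ℕ) < (j:ℕ)+1))
        = insert j (Finset.univ.filter (fun i : Fin N => (i:ℕ) < (j:ℕ))) := by
      ext i
      simp only [Finset.mem_filter, Finset.mem_univ, true_and, Finset.mem_insert, Fin.ext_iff]
      omega
    rw [hfil, Finset.image_insert]
  have hsingle : ∀ j : Fin N, ρ (j:ℕ) ≤ f {s j} := by
    intro j
    have h1 := hsub ∅ (S (j:ℕ)) (Finset.empty_subset _) (s j) (hnotmem j)
    rw [hf0] at h1
    have h2 : insert (s j) (∅ : Finset E) = {s j} := rfl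
    rw [h2] at h1
    simp only [hρdef, hSsucc j]
    linarith
  set g : ℕ → Prop := fun k => ∃ hk : k < N, s ⟨k, hk⟩ ∈ Sstar with hgdef
  haveI hdecg : DecidablePred g := Classical.decPred g
  have hfstar0 : 0 ≤ f Sstar := by rw [← hf0]; exact hmono _ _ (Finset.empty_subset _)
  -- the per-step inequality
  have hstep : ∀ t, t < N → f Sstar ≤ αT * (∑ k ∈ Finset.range t, ρ k)
      + (1-αT) * (∑ k ∈ (Finset.range t).filter g, ρ k)
      + ((N:ℝ) - ((Finset.range t).filter g).card) * ρ t := by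
    intro t ht
    set J : Finset (Fin N) := Finset.univ.filter (fun j : Fin N => (j:ℕ) < t ∧ s j ∈ Sstar)
      with hJ
    set K : Finset (Fin N) := Finset.univ.filter (fun j : Fin N => (j:ℕ) < t ∧ s j ∉ Sstar)
      with hK
    have hcap : Sstar ∩ S t = J.image s := by
      ext e
      simp only [Finset.mem_inter, Finset.mem_image, Finset.mem_filter, Finset.mem_univ,
        true_and, hS, hJ]
      constructor
      · rintro ⟨he, j, hjt, rfl⟩
        exact ⟨j, ⟨hjt, he⟩, rfl⟩
      · rintro ⟨j, ⟨hjt, hj⟩, rfl⟩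
        exact ⟨hj, j, hjt, rfl⟩
    have hdiffim : S t \ Sstar = K.image s := by
      ext e
      simp only [Finset.mem_sdiff, Finset.mem_image, Finset.mem_filter, Finset.mem_univ,
        true_and, hS, hK]
      constructor
      · rintro ⟨⟨j, hjt, rfl⟩, he⟩
        exact ⟨j, ⟨hjt, he⟩, rfl⟩
      · rintro ⟨j, ⟨hjt, hj⟩, rfl⟩
        exact ⟨⟨j, hjt, rfl⟩, hj⟩
    -- card conversion
    have hcard_conv : ((Finset.range t).filter g).card = J.card := by
      apply Finset.card_bij (fun (k : ℕ) (hk : k ∈ (Finset.range t).filter g) =>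
        (⟨k, by simp only [Finset.mem_filter, Finset.mem_range] at hk; omega⟩ : Fin N))
      · intro k hk
        simp only [Finset.mem_filter, Finset.mem_range, hgdef] at hk
        obtain ⟨hkt, hkk, hmem⟩ := hk
        simp only [hJ, Finset.mem_filter, Finset.mem_univ, true_and]
        exact ⟨hkt, hmem⟩
      · intro k₁ hk₁ k₂ hk₂ h
        simpa [Fin.ext_iff] using h
      · intro j hj
        simp only [hJ, Finset.mem_filter, Finset.mem_univ, true_and] at hj
        refine ⟨(j:ℕ), ?_, ?_⟩
        · simp only [Finset.mem_filter, Finset.mem_range, hgdef]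
          exact ⟨hj.1, j.isLt, by simpa using hj.2⟩
        · simp
    -- sum conversion for the complement
    have hsum_conv : ∑ k ∈ (Finset.range t).filter (fun k => ¬ g k), ρ k
        = ∑ j ∈ K, ρ (j:ℕ) := by
      apply Finset.sum_bij (fun (k : ℕ) (hk : k ∈ (Finset.range t).filter (fun k => ¬ g k)) =>
        (⟨k, by simp only [Finset.mem_filter, Finset.mem_range] at hk; omega⟩ : Fin N))
      · intro k hk
        simp only [Finset.mem_filter, Finset.mem_range, hgdef] at hk
        obtain ⟨hkt, hneg⟩ := hk
        simp only [hK, Finset.mem_filter, Finset.mem_univ, true_and]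
        refine ⟨hkt, fun hmem => hneg ⟨by omega, hmem⟩⟩
      · intro k₁ hk₁ k₂ hk₂ h
        simpa [Fin.ext_iff] using h
      · intro j hj
        simp only [hK, Finset.mem_filter, Finset.mem_univ, true_and] at hj
        refine ⟨(j:ℕ), ?_, ?_⟩
        · simp only [Finset.mem_filter, Finset.mem_range, hgdef]
          refine ⟨hj.1, fun hg => ?_⟩
          obtain ⟨hk, hmem⟩ := hg
          exact hj.2 (by simpa using hmem)
        · simp
      · intro k hk; rfl
    -- bound on the gain sum over Sstar
    have hC : ∑ e ∈ Sstar, (f (insert e (S t)) - f (S t))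
        ≤ ((N:ℝ) - ((Finset.range t).filter g).card) * ρ t := by
      have hsplit : ∑ e ∈ Sstar ∩ S t, (f (insert e (S t)) - f (S t))
          + ∑ e ∈ Sstar \ S t, (f (insert e (S t)) - f (S t))
          = ∑ e ∈ Sstar, (f (insert e (S t)) - f (S t)) :=
        Finset.sum_inter_add_sum_sdiff _ _ _
      have hzero : ∑ e ∈ Sstar ∩ S t, (f (insert e (S t)) - f (S t)) = 0 := by
        apply Finset.sum_eq_zero
        intro e he
        rw [Finset.insert_eq_self.2 (Finset.mem_inter.1 he).2, sub_self]
      have hbound : ∑ e ∈ Sstar \ S t, (f (insert e (S t)) - f (S t))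
          ≤ ((Sstar \ S t).card : ℝ) * ρ t := by
        have := Finset.sum_le_card_nsmul (Sstar \ S t)
          (fun e => f (insert e (S t)) - f (S t)) (ρ t) ?_
        · simpa [nsmul_eq_mul] using this
        · intro e he
          have heS : e ∉ S t := (Finset.mem_sdiff.1 he).2
          have := hgreedy ⟨t, ht⟩ e heS
          simp only [hρdef]
          rw [hSsucc ⟨t, ht⟩]
          exact this
      have hcard2 : ((Sstar \ S t).card : ℝ) ≤ (N:ℝ) - ((Finset.range t).filter g).card := by
        have h4 : (Sstar \ S t).card + (Sstar ∩ S t).card = Sstar.card :=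
          Finset.card_sdiff_add_card_inter _ _
        have h5 : (Sstar ∩ S t).card = J.card := by rw [hcap, Finset.card_image_of_injective _ hs]
        have h6 : Sstar.card ≤ N := hstar
        rw [hcard_conv]
        have : ((Sstar \ S t).card : ℝ) + (J.card : ℝ) ≤ (N:ℝ) := by
          rw [← h5]
          exact_mod_cast le_trans (le_of_eq h4) h6
        linarith
      have := mul_le_mul_of_nonneg_right hcard2 (hρ0 t)
      linarith
    -- curvature lower bound for removed elements
    have hD : (1-αT) * (∑ k ∈ (Finset.range t).filter (fun k => ¬ g k), ρ k)
        ≤ ∑ e ∈ S t \ Sstar,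
            (f (insert e (Finset.univ.erase e)) - f (Finset.univ.erase e)) := by
      rw [hsum_conv, hdiffim, Finset.sum_image (fun a _ b _ h => hs h), Finset.mul_sum]
      apply Finset.sum_le_sum
      intro j _
      calc (1-αT) * ρ (j:ℕ) ≤ (1-αT) * f {s j} :=
            mul_le_mul_of_nonneg_left (hsingle j) (by linarith)
        _ ≤ _ := hcurv (s j)
    -- telescoping bounds
    have hE := sub_remove f hsub (S t \ Sstar) (Sstar ∪ S t)
      (le_trans (Finset.sdiff_subset) Finset.subset_union_right)
    have hsetid : (Sstar ∪ S t) \ (S t \ Sstar) = Sstar := by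
      ext e
      simp only [Finset.mem_sdiff, Finset.mem_union]
      tauto
    rw [hsetid] at hE
    have hF2 := add_bound f hmono hsub (S t) Sstar
    have hucomm : Sstar ∪ S t = S t ∪ Sstar := Finset.union_comm _ _
    rw [hucomm] at hE
    have hFRQ : ∑ k ∈ (Finset.range t).filter g, ρ k
        + ∑ k ∈ (Finset.range t).filter (fun k => ¬ g k), ρ k
        = ∑ k ∈ Finset.range t, ρ k := Finset.sum_filter_add_sum_filter_not _ _ _
    have hFt' := hFt t
    have hQB : ∑ k ∈ (Finset.range t).filter (fun k => ¬ g k), ρ k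
        = ∑ k ∈ Finset.range t, ρ k - ∑ k ∈ (Finset.range t).filter g, ρ k := by
      linarith
    have hexp : (1-αT) * (∑ k ∈ (Finset.range t).filter (fun k => ¬ g k), ρ k)
        = (1-αT) * (∑ k ∈ Finset.range t, ρ k)
          - (1-αT) * (∑ k ∈ (Finset.range t).filter g, ρ k) := by
      rw [hQB]; ring
    linarith
  have hcore := core N hN αT hαTpos hα1 ρ hρ0 g (f Sstar) hfstar0 hstep
  rw [hFt N] at hcore
  have hrw : ((N:ℝ) - αT)/(N:ℝ) = 1 - αT/(N:ℝ) := by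
    rw [sub_div, div_self hN0]
  rw [hrw]
  exact hcore
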